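/- Let n = 3κ for an integer κ ≥ 1, let g, f be formal power series over ℤ/3ℤ with f(0) = 0 admitting an A-sequence (there is A over ℤ/3ℤ with A(0) ≠ 0 and f = z·A(f)), and let i ≠ j with i, j ∈ {1,2,3}. Then the induced subgraphs ⟨V_i⟩ and ⟨V_j⟩ of the oriented Riordan graph G_n^σ(g,f) are isomorphic as labeled oriented graphs, i.e. [z^{3(u−1)+i−2}] g f^{3(v−1)+i−1} = [z^{3(u−1)+j−2}] g f^{3(v−1)+j−1} for all 1 ≤ v < u ≤ κ, if and only if [z^{3m+i−2}] g f^{i−1} = [z^{3m+j−2}] g f^{j−1} for all integers m with 1 ≤ m ≤ κ−1. -/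

import Mathlib

open PowerSeries

/-- Substitution `A(f)` of a power series `f` into a power series `A`.
When `f(0) = 0`, the coefficient of `z^n` in `A(f)` only involves `f^k` for `k ≤ n`
(since `f^k` has order `≥ k`), so the finite sum below is the usual composition. -/
noncomputable def psComp {R : Type*} [CommRing R] (A f : PowerSeries R) : PowerSeries R :=
  PowerSeries.mk fun n => ∑ k ∈ Finset.range (n + 1), coeff k A * coeff n (f ^ k)

lemma frob_id : frobenius (ZMod 3) 3 = RingHom.id (ZMod 3) := by
  haveI : Fact (Nat.Prime 3) := ⟨by norm_num⟩
  ext a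
  simp [frobenius_def, ZMod.pow_card]

lemma coeff_cube (h : PowerSeries (ZMod 3)) (n : ℕ) :
    coeff n (h ^ 3) =
      if 3 ∣ n then coeff (n / 3) h else 0 := by
  haveI : Fact (Nat.Prime 3) := ⟨by norm_num⟩
  set P : Polynomial (ZMod 3) := trunc (n + 1) h with hP
  have h1 : P ^ 3 = Polynomial.expand (ZMod 3) 3 P := by
    have := Polynomial.map_frobenius_expand (p := 3) P
    rw [frob_id, Polynomial.map_id] at this
    exact this.symm
  have h2 : coeff n (h ^ 3) = (P ^ 3).coeff n := by
    have := PowerSeries.trunc_trunc_pow h (n + 1) 3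
    have h3 : ((trunc (n+1) ((P : PowerSeries (ZMod 3)) ^ 3)).coeff n : ZMod 3)
        = (trunc (n+1) (h ^ 3)).coeff n := by rw [this]
    rw [coeff_trunc, coeff_trunc] at h3
    simp only [if_pos (Nat.lt_succ_self n)] at h3
    rw [← h3, ← Polynomial.coe_pow, Polynomial.coeff_coe]
  rw [h2, h1, Polynomial.coeff_expand (by norm_num : 0 < 3)]
  split_ifs with hd
  · rw [hP, coeff_trunc, if_pos]
    omega
  · rfl

lemma coeff_mul_cube (G h : PowerSeries (ZMod 3)) (N : ℕ) :
    coeff N (G * h ^ 3) =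
      ∑ m ∈ Finset.range (N / 3 + 1),
        coeff m h * coeff (N - 3 * m) G := by
  rw [mul_comm, coeff_mul, Finset.Nat.sum_antidiagonal_eq_sum_range_succ_mk]
  simp only [coeff_cube]
  rw [Finset.sum_congr rfl (fun k _ => by rw [ite_mul, zero_mul]), ← Finset.sum_filter]
  refine Finset.sum_nbij' (fun k => k / 3) (fun m => 3 * m) ?_ ?_ ?_ ?_ ?_
  · intro k hk
    simp only [Finset.mem_filter, Finset.mem_range] at hk ⊢
    omega
  · intro m hm
    simp only [Finset.mem_filter, Finset.mem_range] at hm ⊢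
    omega
  · intro k hk
    simp only [Finset.mem_filter, Finset.mem_range] at hk
    show 3 * (k / 3) = k
    omega
  · intro m hm
    show 3 * m / 3 = m
    omega
  · intro k hk
    simp only [Finset.mem_filter, Finset.mem_range] at hk
    obtain ⟨-, c, rfl⟩ := hk
    show _ = coeff (3 * c / 3) h * coeff (N - 3 * (3 * c / 3)) G
    rw [Nat.mul_div_cancel_left _ (by norm_num : 0 < 3)]

lemma coeff_mul_pow_lt (g f : PowerSeries (ZMod 3))
    (hf : constantCoeff f = 0) {k n : ℕ} (h : n < k) :
    coeff n (g * f ^ k) = 0 := by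
  have hd : (X : PowerSeries (ZMod 3)) ^ k ∣ g * f ^ k :=
    Dvd.dvd.mul_left (pow_dvd_pow_of_dvd (X_dvd_iff.mpr hf) k) g
  exact X_pow_dvd_iff.mp hd n h

lemma key (g f : PowerSeries (ZMod 3)) (hf : constantCoeff f = 0)
    (i u v : ℕ) (hi : i = 1 ∨ i = 2 ∨ i = 3) (hv : 1 ≤ v) (huv : v < u) :
    coeff (3 * (u - 1) + i - 2) (g * f ^ (3 * (v - 1) + i - 1)) =
      ∑ m ∈ Finset.range (u - 1),
        coeff m (f ^ (v - 1)) *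
          coeff (3 * (u - 1 - m) + i - 2) (g * f ^ (i - 1)) := by
  have hi1 : 1 ≤ i := by omega
  have hexp : 3 * (v - 1) + i - 1 = (i - 1) + (v - 1) * 3 := by omega
  rw [hexp, pow_add, pow_mul, ← mul_assoc, coeff_mul_cube]
  rcases hi with rfl | rfl | rfl
  · have hr : (3 * (u - 1) + 1 - 2) / 3 + 1 = u - 1 := by omega
    rw [hr]
    refine Finset.sum_congr rfl fun m hm => ?_
    have hm' := Finset.mem_range.mp hm
    have : 3 * (u - 1) + 1 - 2 - 3 * m = 3 * (u - 1 - m) + 1 - 2 := by omega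
    rw [this]
  · have hr : (3 * (u - 1) + 2 - 2) / 3 + 1 = (u - 1) + 1 := by omega
    rw [hr, Finset.sum_range_succ]
    have hz : 3 * (u - 1) + 2 - 2 - 3 * (u - 1) = 0 := by omega
    rw [hz, coeff_mul_pow_lt g f hf (by norm_num : (0:ℕ) < 2 - 1), mul_zero, add_zero]
    refine Finset.sum_congr rfl fun m hm => ?_
    have hm' := Finset.mem_range.mp hm
    have : 3 * (u - 1) + 2 - 2 - 3 * m = 3 * (u - 1 - m) + 2 - 2 := by omega
    rw [this]
  · have hr : (3 * (u - 1) + 3 - 2) / 3 + 1 = (u - 1) + 1 := by omega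
    rw [hr, Finset.sum_range_succ]
    have hz : 3 * (u - 1) + 3 - 2 - 3 * (u - 1) = 1 := by omega
    rw [hz, coeff_mul_pow_lt g f hf (by norm_num : (1:ℕ) < 3 - 1), mul_zero, add_zero]
    refine Finset.sum_congr rfl fun m hm => ?_
    have hm' := Finset.mem_range.mp hm
    have : 3 * (u - 1) + 3 - 2 - 3 * m = 3 * (u - 1 - m) + 3 - 2 := by omega
    rw [this]

/-- For `n = 3κ` and `i ≠ j` in `{1,2,3}`, the induced subgraphs `⟨V_i⟩` and `⟨V_j⟩`
of the oriented Riordan graph `G_n^σ(g,f)` are isomorphic as labeled oriented graphs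
(entrywise equality of their skew-adjacency matrices) if and only if
`[z^{3m+i−2}] g f^{i−1} = [z^{3m+j−2}] g f^{j−1}` for all `1 ≤ m ≤ κ−1`. -/
theorem induced_subgraphs_isomorphic_iff (κ : ℕ) (hκ : 1 ≤ κ)
    (g f A : PowerSeries (ZMod 3))
    (hf : constantCoeff f = 0)
    (hA : constantCoeff A ≠ 0)
    (hfA : f = X * psComp A f)
    (i j : ℕ) (hi : i = 1 ∨ i = 2 ∨ i = 3) (hj : j = 1 ∨ j = 2 ∨ j = 3) (hij : i ≠ j) :
    (∀ u v : ℕ, 1 ≤ v → v < u → u ≤ κ →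
        coeff (3 * (u - 1) + i - 2) (g * f ^ (3 * (v - 1) + i - 1)) =
          coeff (3 * (u - 1) + j - 2) (g * f ^ (3 * (v - 1) + j - 1))) ↔
    (∀ m : ℕ, 1 ≤ m → m ≤ κ - 1 →
        coeff (3 * m + i - 2) (g * f ^ (i - 1)) =
          coeff (3 * m + j - 2) (g * f ^ (j - 1))) := by
  constructor
  · intro H m hm1 hm2
    have h := H (m + 1) 1 le_rfl (by omega) (by omega)
    have e1 : 3 * (m + 1 - 1) + i - 2 = 3 * m + i - 2 := by omega
    have e2 : 3 * (m + 1 - 1) + j - 2 = 3 * m + j - 2 := by omega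
    have e3 : 3 * (1 - 1) + i - 1 = i - 1 := by omega
    have e4 : 3 * (1 - 1) + j - 1 = j - 1 := by omega
    rwa [e1, e2, e3, e4] at h
  · intro H u v hv huv hu
    rw [key g f hf i u v hi hv huv, key g f hf j u v hj hv huv]
    refine Finset.sum_congr rfl fun m hm => ?_
    have hm' := Finset.mem_range.mp hm
    rw [H (u - 1 - m) (by omega) (by omega)]
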